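/- Let K = (G,M,I) be a finite formal context whose interordinal scaling dimension is defined, and let w denote the width of the partially ordered set (under set inclusion) of meet-irreducible extents of K. Then w/2 ≤ isd(K) ≤ w, i.e., the interordinal scaling dimension of K is at least w/2 and at most w. -/

import Mathlib

/-- `E` is an extent of the formal context `(G, M, I)`. -/
def IsExtent {G M : Type*} (I : G → M → Prop) (E : Set G) : Prop :=
  ∃ B : Set M, E = {g | ∀ m ∈ B, I g m}

/-- A meet-irreducible extent: an extent `E ≠ G` that is not the intersection of the
extents properly containing it. -/
def IsMeetIrreducibleExtent {G M : Type*} (I : G → M → Prop) (E : Set G) : Prop :=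
  IsExtent I E ∧ E ≠ Set.univ ∧ E ≠ ⋂₀ {F | IsExtent I F ∧ E ⊂ F}

/-- An extent ladder of `K = (G, M, I)`: a set of nonempty extents containing no three
pairwise `⊆`-incomparable members and closed under complementation in `G`. -/
def IsExtentLadder {G M : Type*} (I : G → M → Prop) (R : Set (Set G)) : Prop :=
  (∀ A ∈ R, IsExtent I A ∧ A.Nonempty) ∧
  (¬ ∃ A ∈ R, ∃ B ∈ R, ∃ C ∈ R,
    (¬ A ⊆ B ∧ ¬ B ⊆ A) ∧ (¬ A ⊆ C ∧ ¬ C ⊆ A) ∧ (¬ B ⊆ C ∧ ¬ C ⊆ B)) ∧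
  (∀ A ∈ R, Aᶜ ∈ R)

/-- `K` has interordinal scaling dimension at most `d`. -/
def HasISDAtMost {G M : Type*} (I : G → M → Prop) (d : ℕ) : Prop :=
  ∃ R : Fin d → Set (Set G), (∀ i, IsExtentLadder I (R i)) ∧
    {E | IsExtent I E} = {E | ∃ F ⊆ ⋃ i, R i, E = ⋂₀ F}

/-- The interordinal scaling dimension: the least `d` such that `HasISDAtMost I d`. -/
noncomputable def isd {G M : Type*} (I : G → M → Prop) : ℕ :=
  sInf {d | HasISDAtMost I d}

/-- The width of a family `S` of subsets of `G`, partially ordered by inclusion: the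
maximal cardinality of an antichain contained in `S`. -/
noncomputable def posetWidth {G : Type*} (S : Set (Set G)) : ℕ :=
  sSup {n | ∃ A ⊆ S, A.Finite ∧ IsAntichain (· ⊆ ·) A ∧ A.ncard = n}


/-- max size of a Finset antichain inside s -/
noncomputable def fwidth {α : Type*} [PartialOrder α] (s : Finset α) : ℕ :=
  sSup {n | ∃ t ⊆ s, IsAntichain (· ≤ ·) (t : Set α) ∧ t.card = n}

section Dil
variable {α : Type*} [PartialOrder α]

lemma fwidth_bddAbove (s : Finset α) :
    BddAbove {n | ∃ t ⊆ s, IsAntichain (· ≤ ·) (t : Set α) ∧ t.card = n} := by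
  refine ⟨s.card, fun n hn => ?_⟩
  obtain ⟨t, hts, -, rfl⟩ := hn
  exact Finset.card_le_card hts

lemma fwidth_nonempty (s : Finset α) :
    {n | ∃ t ⊆ s, IsAntichain (· ≤ ·) (t : Set α) ∧ t.card = n}.Nonempty :=
  ⟨0, ∅, Finset.empty_subset _, by simp [Set.Subsingleton.isAntichain], by simp⟩

lemma card_le_fwidth {s t : Finset α} (hts : t ⊆ s)
    (ht : IsAntichain (· ≤ ·) (t : Set α)) : t.card ≤ fwidth s :=
  le_csSup (fwidth_bddAbove s) ⟨t, hts, ht, rfl⟩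

lemma fwidth_spec (s : Finset α) :
    ∃ t ⊆ s, IsAntichain (· ≤ ·) (t : Set α) ∧ t.card = fwidth s :=
  Nat.sSup_mem (fwidth_nonempty s) (fwidth_bddAbove s)

lemma fwidth_mono {s s' : Finset α} (h : s ⊆ s') : fwidth s ≤ fwidth s' := by
  obtain ⟨t, hts, ht, hc⟩ := fwidth_spec s
  rw [← hc]; exact card_le_fwidth (hts.trans h) ht

/-- a finite nonempty chain has a greatest element -/
lemma chain_finset_max {c : Finset α} (hc : IsChain (· ≤ ·) (c : Set α))
    (hne : c.Nonempty) : ∃ m ∈ c, ∀ x ∈ c, x ≤ m := by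
  obtain ⟨m, hm, hmax⟩ : ∃ m ∈ (c : Set α), ∀ x ∈ (c : Set α), id m ≤ id x → id m = id x := by
    obtain ⟨m, hm⟩ := Set.Finite.exists_maximal (Set.toFinite (c : Set α)) (by exact_mod_cast hne)
    exact ⟨m, hm.1, fun x hx h => le_antisymm h (hm.2 hx h)⟩
  refine ⟨m, hm, fun x hx => ?_⟩
  rcases eq_or_ne x m with rfl | hne'
  · exact le_refl _
  · rcases hc hx hm hne' with h | h
    · exact h
    · exact (hmax x hx h).ge

theorem dilworth (s : Finset α) : ∃ C : Finset (Finset α),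
    C.card ≤ fwidth s ∧ (∀ c ∈ C, IsChain (· ≤ ·) (c : Set α)) ∧
    ∀ x ∈ s, ∃ c ∈ C, x ∈ c := by
  classical
  induction s using Finset.strongInduction with
  | _ s IH =>
  rcases s.eq_empty_or_nonempty with rfl | hne
  · exact ⟨∅, by simp⟩
  have : Nonempty α := ⟨hne.choose⟩
  obtain ⟨a, ha, hamax⟩ : ∃ m ∈ (s : Set α), ∀ x ∈ (s : Set α), id m ≤ id x → id m = id x := by
    obtain ⟨m, hm⟩ := Set.Finite.exists_maximal (Set.toFinite (s : Set α)) (by exact_mod_cast hne)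
    exact ⟨m, hm.1, fun x hx h => le_antisymm h (hm.2 hx h)⟩
  simp only [id] at hamax
  set s' := s.erase a with hs'
  have hs'ss : s' ⊂ s := Finset.erase_ssubset ha
  obtain ⟨C', hC'card, hC'chain, hC'cov⟩ := IH s' hs'ss
  set k := fwidth s' with hk
  have hks : k ≤ fwidth s := fwidth_mono hs'ss.subset
  rcases lt_or_ge k (fwidth s) with hlt | hge
  · -- easy case: width grows, add chain {a}
    refine ⟨insert {a} C', ?_, ?_, ?_⟩
    · calc (insert {a} C').card ≤ C'.card + 1 := Finset.card_insert_le _ _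
        _ ≤ fwidth s := by omega
    · intro c hc
      rcases Finset.mem_insert.1 hc with rfl | hc
      · simp only [Finset.coe_singleton]
        exact Set.Subsingleton.isChain (Set.subsingleton_singleton)
      · exact hC'chain c hc
    · intro x hx
      rcases eq_or_ne x a with hxa | hxa
      · refine ⟨_, Finset.mem_insert_self {a} C', ?_⟩
        rw [hxa]; exact Finset.mem_singleton_self a
      · obtain ⟨c, hc, hxc⟩ := hC'cov x (Finset.mem_erase.2 ⟨hxa, hx⟩)
        exact ⟨c, Finset.mem_insert_of_mem hc, hxc⟩
  have hweq : fwidth s = k := le_antisymm hge hks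
  -- Galvin's argument
  obtain ⟨t₀, ht₀s, ht₀a, ht₀c⟩ := fwidth_spec s'
  -- global chain assignment
  set φ : α → Finset α := fun x => if h : ∃ c ∈ C', x ∈ c then h.choose else ∅ with hφ
  have hφspec : ∀ x ∈ s', φ x ∈ C' ∧ x ∈ φ x := by
    intro x hx
    have h : ∃ c ∈ C', x ∈ c := hC'cov x hx
    simp only [hφ, dif_pos h]
    exact ⟨h.choose_spec.1, h.choose_spec.2⟩
  -- two elements of a chain inside an antichain coincide
  have uniq : ∀ t : Finset α, IsAntichain (· ≤ ·) (t : Set α) → ∀ c ∈ C',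
      ∀ x ∈ t, ∀ y ∈ t, x ∈ c → y ∈ c → x = y := by
    intro t hta c hc x hx y hy hxc hyc
    by_contra hne'
    rcases hC'chain c hc hxc hyc hne' with h | h
    · exact hta hx hy hne' h
    · exact hta hy hx (Ne.symm hne') h
  -- every k-antichain in s' meets every chain of C', via φ
  have meets : ∀ t ⊆ s', IsAntichain (· ≤ ·) (t : Set α) → t.card = k →
      ∀ c ∈ C', ∃ x ∈ t, x ∈ c ∧ φ x = c := by
    intro t hts hta htc c hc
    have hinj : ∀ x₁ x₂ (hx₁ : x₁ ∈ t) (hx₂ : x₂ ∈ t),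
        φ x₁ = φ x₂ → x₁ = x₂ := by
      intro x₁ x₂ hx₁ hx₂ heq
      have h1 := (hφspec x₁ (hts hx₁)).2
      have h2 := (hφspec x₂ (hts hx₂)).2
      rw [heq] at h1
      exact uniq t hta (φ x₂) (hφspec x₂ (hts hx₂)).1 x₁ hx₁ x₂ hx₂ h1 h2
    have hcard : C'.card ≤ t.card := by omega
    obtain ⟨x, hx, hxc⟩ := Finset.surj_on_of_inj_on_of_card_le (fun x _ => φ x)
      (fun x hx => (hφspec x (hts hx)).1) hinj hcard c hc
    refine ⟨x, hx, ?_, hxc.symm⟩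
    rw [hxc]; exact (hφspec x (hts hx)).2
  -- M c : elements of chain c lying in some k-antichain of s'
  set Mc : Finset α → Finset α := fun c =>
    s'.filter (fun x => x ∈ c ∧ ∃ t ⊆ s', IsAntichain (· ≤ ·) (t : Set α) ∧ t.card = k ∧ x ∈ t)
    with hMc
  have hMcne : ∀ c ∈ C', (Mc c).Nonempty := by
    intro c hc
    obtain ⟨x, hxt, hxc, -⟩ := meets t₀ ht₀s ht₀a ht₀c c hc
    exact ⟨x, Finset.mem_filter.2 ⟨ht₀s hxt, hxc, t₀, ht₀s, ht₀a, ht₀c, hxt⟩⟩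
  have hMcsub : ∀ c, (Mc c : Set α) ⊆ (c : Set α) := by
    intro c x hx
    exact (Finset.mem_filter.1 hx).2.1
  have hgex : ∀ c : Finset α, ∃ m : α, c ∈ C' → m ∈ Mc c ∧ ∀ x ∈ Mc c, x ≤ m := by
    intro c
    by_cases hc : c ∈ C'
    · obtain ⟨m, hm, hmax⟩ := chain_finset_max
        ((hC'chain c hc).mono (hMcsub c)) (hMcne c hc)
      exact ⟨m, fun _ => ⟨hm, hmax⟩⟩
    · exact ⟨Classical.arbitrary α, fun h => absurd h hc⟩
  choose g hg using hgex
  have hgMc : ∀ c ∈ C', g c ∈ Mc c := fun c hc => (hg c hc).1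
  have hgmax : ∀ c ∈ C', ∀ x ∈ Mc c, x ≤ g c := fun c hc => (hg c hc).2
  -- facts about g c
  have hgs' : ∀ c ∈ C', g c ∈ s' := fun c hc => (Finset.mem_filter.1 (hgMc c hc)).1
  have hgmemc : ∀ c ∈ C', g c ∈ c := fun c hc => (Finset.mem_filter.1 (hgMc c hc)).2.1
  have hgwit : ∀ c ∈ C', ∃ t ⊆ s', IsAntichain (· ≤ ·) (t : Set α) ∧ t.card = k ∧ g c ∈ t :=
    fun c hc => (Finset.mem_filter.1 (hgMc c hc)).2.2
  -- g is injective on C'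
  have hginj : ∀ c ∈ C', ∀ d ∈ C', g c = g d → c = d := by
    intro c hc d hd heq
    obtain ⟨t, hts, hta, htc, hgt⟩ := hgwit d hd
    have hgc : g d ∈ c := by rw [← heq]; exact hgmemc c hc
    have hgd : g d ∈ d := hgmemc d hd
    obtain ⟨x, hxt, hxc, hφx⟩ := meets t hts hta htc c hc
    obtain ⟨y, hyt, hyd, hφy⟩ := meets t hts hta htc d hd
    have hx : x = g d := uniq t hta c hc x hxt (g d) hgt hxc hgc
    have hy : y = g d := uniq t hta d hd y hyt (g d) hgt hyd hgd
    rw [hx] at hφx; rw [hy] at hφy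
    rw [← hφx]; exact hφy
  -- A := image of g over C' is a k-antichain in s'
  set A : Finset α := C'.image g with hA
  have hAs' : A ⊆ s' := by
    intro x hx
    obtain ⟨c, hc, rfl⟩ := Finset.mem_image.1 hx
    exact hgs' c hc
  have hAcard : A.card = C'.card := Finset.card_image_of_injOn
    (fun c hc d hd h => hginj c (Finset.mem_coe.1 hc) d (Finset.mem_coe.1 hd) h)
  have hC'k : C'.card = k := by
    have h1 : k ≤ C'.card := by
      -- t₀ injects into C' via φ
      have hinj : ∀ x₁ x₂ (hx₁ : x₁ ∈ t₀) (hx₂ : x₂ ∈ t₀), φ x₁ = φ x₂ → x₁ = x₂ := by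
        intro x₁ x₂ hx₁ hx₂ heq
        have h1 := (hφspec x₁ (ht₀s hx₁)).2
        have h2 := (hφspec x₂ (ht₀s hx₂)).2
        rw [heq] at h1
        exact uniq t₀ ht₀a (φ x₂) (hφspec x₂ (ht₀s hx₂)).1 x₁ hx₁ x₂ hx₂ h1 h2
      calc k = t₀.card := ht₀c.symm
        _ ≤ C'.card := Finset.card_le_card_of_injOn (fun x => φ x)
            (fun x hx => (hφspec x (ht₀s hx)).1)
            (fun x hx y hy h => hinj x y (Finset.mem_coe.1 hx) (Finset.mem_coe.1 hy) h)
    omega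
  have hAanti : IsAntichain (· ≤ ·) (A : Set α) := by
    intro x hx y hy hxy hle
    obtain ⟨c, hc, rfl⟩ := Finset.mem_image.1 (by exact_mod_cast hx)
    obtain ⟨d, hd, rfl⟩ := Finset.mem_image.1 (by exact_mod_cast hy)
    have hcd : c ≠ d := fun h => hxy (by rw [h])
    -- g c ≤ g d with c ≠ d : contradiction
    obtain ⟨t, hts, hta, htc, hgt⟩ := hgwit d hd
    obtain ⟨y', hy't, hy'c, -⟩ := meets t hts hta htc c hc
    -- y' ∈ M c so y' ≤ g c ≤ g d, and y', g d ∈ t antichain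
    have hy'Mc : y' ∈ Mc c := Finset.mem_filter.2 ⟨hts hy't, hy'c, t, hts, hta, htc, hy't⟩
    have hy'le : y' ≤ g c := hgmax c hc y' hy'Mc
    have hy'ne : y' ≠ g d := by
      rintro rfl
      exact hxy (le_antisymm hle (hy'le))
    exact hta hy't hgt hy'ne (hy'le.trans hle)
  -- a is comparable to some g c with g c ≤ a
  have hcompare : ∃ c ∈ C', g c ≤ a ∧ g c ≠ a := by
    by_contra hcon
    push_neg at hcon
    have hanA : a ∉ A := fun h => (Finset.mem_erase.1 (hAs' h)).1 rfl
    have : IsAntichain (· ≤ ·) ((insert a A : Finset α) : Set α) := by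
      intro x hx y hy hxy hle
      simp only [Finset.coe_insert, Set.mem_insert_iff] at hx hy
      rcases hx with hxa | hx
      · rcases hy with hya | hy
        · exact hxy (hxa.trans hya.symm)
        · have hys : y ∈ s := (Finset.erase_subset _ _) (hAs' (by exact_mod_cast hy))
          rw [hxa] at hle hxy
          exact hxy (hamax y hys hle)
      · rcases hy with hya | hy
        · obtain ⟨c, hc, hgcx⟩ := Finset.mem_image.1 (by exact_mod_cast hx)
          rw [← hgcx, hya] at hle hxy
          exact hxy (hcon c hc hle)
        · exact hAanti hx hy hxy hle
    have hcard : (insert a A).card ≤ fwidth s := by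
      apply card_le_fwidth _ this
      intro x hx
      rcases Finset.mem_insert.1 hx with rfl | hx
      · exact ha
      · exact (Finset.erase_subset _ _) (hAs' hx)
    rw [Finset.card_insert_of_notMem hanA, hAcard, hC'k, hweq] at hcard
    omega
  obtain ⟨c₀, hc₀, hgca, hgcne⟩ := hcompare
  -- K := {x ∈ c₀ ∩ s' | x ≤ g c₀} ∪ {a}
  set K : Finset α := insert a (s'.filter (fun x => x ∈ c₀ ∧ x ≤ g c₀)) with hK
  have hKchain : IsChain (· ≤ ·) (K : Set α) := by
    intro x hx y hy hxy
    simp only [hK, Finset.coe_insert, Set.mem_insert_iff, Finset.coe_filter,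
      Set.mem_setOf_eq] at hx hy
    rcases hx with rfl | ⟨hxs, hxc, hxle⟩
    · rcases hy with rfl | ⟨hys, hyc, hyle⟩
      · exact absurd rfl hxy
      · right; exact hyle.trans hgca
    · rcases hy with rfl | ⟨hys, hyc, hyle⟩
      · left; exact hxle.trans hgca
      · exact hC'chain c₀ hc₀ hxc hyc hxy
  have haK : a ∈ K := Finset.mem_insert_self _ _
  set s'' := s \ K with hs''
  have hs''sub : s'' ⊆ s' := by
    intro x hx
    obtain ⟨hxs, hxK⟩ := Finset.mem_sdiff.1 hx
    exact Finset.mem_erase.2 ⟨fun h => hxK (h ▸ haK), hxs⟩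
  have hs''ss : s'' ⊂ s := by
    refine Finset.ssubset_iff_of_subset (Finset.sdiff_subset) |>.2 ⟨a, ha, ?_⟩
    simp [hs'', haK]
  -- width of s'' is at most k - 1
  have hw'' : fwidth s'' ≤ k - 1 := by
    obtain ⟨t, hts, hta, htc⟩ := fwidth_spec s''
    rw [← htc]
    have htk : t.card ≤ k := by
      rw [hk]
      exact card_le_fwidth (hts.trans hs''sub) hta
    rcases eq_or_lt_of_le htk with heq | hlt'
    · exfalso
      obtain ⟨y, hyt, hyc, -⟩ := meets t (hts.trans hs''sub) hta heq c₀ hc₀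
      have hyMc : y ∈ Mc c₀ :=
        Finset.mem_filter.2 ⟨(hts.trans hs''sub) hyt, hyc, t, hts.trans hs''sub, hta, heq, hyt⟩
      have hyle : y ≤ g c₀ := hgmax c₀ hc₀ y hyMc
      have hyK : y ∈ K := Finset.mem_insert_of_mem
        (Finset.mem_filter.2 ⟨(hts.trans hs''sub) hyt, hyc, hyle⟩)
      exact (Finset.mem_sdiff.1 (hts hyt)).2 hyK
    · omega
  obtain ⟨C'', hC''card, hC''chain, hC''cov⟩ := IH s'' hs''ss
  have hkpos : 1 ≤ k := by
    -- k = fwidth s' ; if k = 0 then C'.card = 0 contradiction? s' could be empty!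
    -- But we need it only to conclude card bound; handle via omega with cases
    by_contra h
    push_neg at h
    interval_cases k
    · -- k = 0 : then fwidth s = 0, but {a} is an antichain in s
      have : ({a} : Finset α).card ≤ fwidth s := by
        apply card_le_fwidth (by simpa using ha)
        simp only [Finset.coe_singleton]
        exact Set.Subsingleton.isAntichain Set.subsingleton_singleton _
      simp [hweq] at this
  refine ⟨insert K C'', ?_, ?_, ?_⟩
  · calc (insert K C'').card ≤ C''.card + 1 := Finset.card_insert_le _ _
      _ ≤ fwidth s := by omega
  · intro c hc
    rcases Finset.mem_insert.1 hc with rfl | hc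
    · exact hKchain
    · exact hC''chain c hc
  · intro x hx
    by_cases hxK : x ∈ K
    · exact ⟨K, Finset.mem_insert_self _ _, hxK⟩
    · obtain ⟨c, hc, hxc⟩ := hC''cov x (Finset.mem_sdiff.2 ⟨hx, hxK⟩)
      exact ⟨c, Finset.mem_insert_of_mem hc, hxc⟩

end Dil

section ExtentLemmas
variable {G M : Type*} {I : G → M → Prop}

lemma isExtent_iff {E : Set G} :
    IsExtent I E ↔ E = {g | ∀ m, (∀ h ∈ E, I h m) → I g m} := by
  constructor
  · rintro ⟨B, rfl⟩
    ext g
    simp only [Set.mem_setOf_eq]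
    constructor
    · intro hg m hm
      exact hm g hg
    · intro hg m hmB
      exact hg m (fun h hh => hh m hmB)
  · intro h
    refine ⟨{m | ∀ h ∈ E, I h m}, ?_⟩
    conv_lhs => rw [h]
    rfl

lemma isExtent_sInter {F : Set (Set G)} (h : ∀ A ∈ F, IsExtent I A) :
    IsExtent I (⋂₀ F) := by
  rw [isExtent_iff]
  apply Set.Subset.antisymm
  · intro g hg
    simp only [Set.mem_setOf_eq]
    intro m hm
    exact hm g hg
  · intro g hg A hA
    rw [isExtent_iff.1 (h A hA)]
    intro m hm
    exact hg m (fun x hx => hm x (Set.sInter_subset_of_mem hA hx))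

lemma isExtent_univ : IsExtent I (Set.univ : Set G) :=
  ⟨∅, by simp⟩

/-- every extent is the intersection of the meet-irreducible extents above it -/
lemma extent_eq_sInter_MI [Finite G] {E : Set G} (hE : IsExtent I E) :
    E = ⋂₀ {F | IsMeetIrreducibleExtent I F ∧ E ⊆ F} := by
  induction E using WellFoundedGT.induction with
  | _ E IH =>
  by_cases hMI : IsMeetIrreducibleExtent I E
  · apply Set.Subset.antisymm
    · intro g hg
      exact Set.mem_sInter.2 fun F hF => hF.2 hg
    · exact Set.sInter_subset_of_mem ⟨hMI, le_refl _⟩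
  · rcases eq_or_ne E Set.univ with rfl | huniv
    · apply Set.Subset.antisymm
      · intro g hg
        refine Set.mem_sInter.2 fun F hF => ?_
        exact absurd (Set.univ_subset_iff.1 hF.2) hF.1.2.1
      · intro g _; trivial
    · have hEeq : E = ⋂₀ {F | IsExtent I F ∧ E ⊂ F} := by
        by_contra h
        exact hMI ⟨hE, huniv, h⟩
      apply Set.Subset.antisymm
      · intro g hg
        exact Set.mem_sInter.2 fun F hF => hF.2 hg
      · have hsub : ⋂₀ {F | IsMeetIrreducibleExtent I F ∧ E ⊆ F} ⊆
            ⋂₀ {F | IsExtent I F ∧ E ⊂ F} := by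
          intro g hg
          refine Set.mem_sInter.2 fun F hF => ?_
          have hIH := IH F hF.2 hF.1
          rw [hIH]
          refine Set.mem_sInter.2 fun F' hF' => ?_
          exact Set.mem_sInter.1 hg F' ⟨hF'.1, hF.2.le.trans hF'.2⟩
        rw [← hEeq] at hsub
        exact hsub

end ExtentLemmas

section Main
variable {G M : Type*} {I : G → M → Prop}

/-- every meet-irreducible extent lies in every generating family of ladders -/
lemma MI_mem_ladders {d : ℕ} {R : Fin d → Set (Set G)}
    (hgen : {E | IsExtent I E} = {E | ∃ F ⊆ ⋃ i, R i, E = ⋂₀ F})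
    {E : Set G} (hE : IsMeetIrreducibleExtent I E)
    (hlad : ∀ i, IsExtentLadder I (R i)) : ∃ i, E ∈ R i := by
  obtain ⟨hext, huniv, hirr⟩ := hE
  have hmem : E ∈ {E | ∃ F ⊆ ⋃ i, R i, E = ⋂₀ F} := hgen ▸ hext
  obtain ⟨F, hFsub, hFeq⟩ := hmem
  by_cases hEF : E ∈ F
  · obtain ⟨i, hi⟩ := Set.mem_iUnion.1 (hFsub hEF)
    exact ⟨i, hi⟩
  · exfalso
    apply hirr
    have hFS : F ⊆ {F' | IsExtent I F' ∧ E ⊂ F'} := by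
      intro A hA
      obtain ⟨i, hi⟩ := Set.mem_iUnion.1 (hFsub hA)
      refine ⟨((hlad i).1 A hi).1, ?_⟩
      refine Set.ssubset_iff_subset_ne.2 ⟨?_, ?_⟩
      · rw [hFeq]; exact Set.sInter_subset_of_mem hA
      · rintro rfl; exact hEF hA
    apply Set.Subset.antisymm
    · intro g hg
      refine Set.mem_sInter.2 fun A hA => hA.2.le hg
    · calc ⋂₀ {F' | IsExtent I F' ∧ E ⊂ F'} ⊆ ⋂₀ F := Set.sInter_subset_sInter hFS
        _ = E := hFeq.symm

theorem isd_bounds_via_width_aux [Fintype G] [Fintype M] (I : G → M → Prop)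
    (hdef : ∃ d, HasISDAtMost I d) :
    posetWidth {E | IsMeetIrreducibleExtent I E} / 2 ≤ isd I ∧
    isd I ≤ posetWidth {E | IsMeetIrreducibleExtent I E} := by
  classical
  set MI : Set (Set G) := {E | IsMeetIrreducibleExtent I E} with hMI
  set w := posetWidth MI with hw
  have hbdd : BddAbove {n | ∃ A ⊆ MI, A.Finite ∧ IsAntichain (· ⊆ ·) A ∧ A.ncard = n} := by
    refine ⟨Nat.card (Set G), fun n hn => ?_⟩
    obtain ⟨A, hA, hfin, -, rfl⟩ := hn
    calc A.ncard ≤ (Set.univ : Set (Set G)).ncard := Set.ncard_le_ncard (Set.subset_univ _)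
      _ = Nat.card (Set G) := by rw [Set.ncard_univ]
  have hwne : {n | ∃ A ⊆ MI, A.Finite ∧ IsAntichain (· ⊆ ·) A ∧ A.ncard = n}.Nonempty :=
    ⟨0, ∅, Set.empty_subset _, Set.finite_empty,
      Set.Subsingleton.isAntichain Set.subsingleton_empty _, Set.ncard_empty _⟩
  constructor
  · -- lower bound : w ≤ 2 * isd I
    set d := isd I with hd
    have hmem : HasISDAtMost I d := Nat.sInf_mem hdef
    obtain ⟨R, hlad, hgen⟩ := hmem
    have key : ∀ n ∈ {n | ∃ A ⊆ MI, A.Finite ∧ IsAntichain (· ⊆ ·) A ∧ A.ncard = n},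
        n ≤ 2 * d := by
      rintro n ⟨A, hAMI, hAfin, hAanti, rfl⟩
      have hAsub : ∀ E ∈ A, ∃ i : Fin d, E ∈ R i := fun E hE =>
        MI_mem_ladders hgen (hAMI hE) hlad
      rcases Nat.eq_zero_or_pos d with hd0 | hdpos
      · have hAe : A = ∅ := Set.eq_empty_iff_forall_notMem.2 fun E hE => by
          obtain ⟨i, -⟩ := hAsub E hE
          exact absurd i.2 (by omega)
        simp [hAe]
      set t := hAfin.toFinset with ht
      have htA : ∀ E, E ∈ t ↔ E ∈ A := fun E => Set.Finite.mem_toFinset _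
      set f : Set G → Fin d := fun E =>
        if h : ∃ i : Fin d, E ∈ R i then h.choose else ⟨0, hdpos⟩ with hf
      have hfR : ∀ E ∈ t, E ∈ R (f E) := by
        intro E hE
        have h := hAsub E ((htA E).1 hE)
        simp only [hf, dif_pos h]
        exact h.choose_spec
      have hcard : t.card ≤ 2 * (t.image f).card := by
        apply Finset.card_le_mul_card_image
        intro b hb
        by_contra hgt
        push_neg at hgt
        obtain ⟨x, y, z, hx, hy, hz, hxy, hxz, hyz⟩ :=
          Finset.two_lt_card_iff.1 hgt
        obtain ⟨hxt, hfx⟩ := Finset.mem_filter.1 hx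
        obtain ⟨hyt, hfy⟩ := Finset.mem_filter.1 hy
        obtain ⟨hzt, hfz⟩ := Finset.mem_filter.1 hz
        have hxR : x ∈ R b := hfx ▸ hfR x hxt
        have hyR : y ∈ R b := hfy ▸ hfR y hyt
        have hzR : z ∈ R b := hfz ▸ hfR z hzt
        have hxA := (htA x).1 hxt
        have hyA := (htA y).1 hyt
        have hzA := (htA z).1 hzt
        exact (hlad b).2.1 ⟨x, hxR, y, hyR, z, hzR,
          ⟨hAanti hxA hyA hxy, hAanti hyA hxA (Ne.symm hxy)⟩,
          ⟨hAanti hxA hzA hxz, hAanti hzA hxA (Ne.symm hxz)⟩,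
          ⟨hAanti hyA hzA hyz, hAanti hzA hyA (Ne.symm hyz)⟩⟩
      have himg : (t.image f).card ≤ d := by
        calc (t.image f).card ≤ Fintype.card (Fin d) := Finset.card_le_univ _
          _ = d := Fintype.card_fin d
      have hnc : A.ncard = t.card := Set.ncard_eq_toFinset_card A hAfin
      omega
    have : w ≤ 2 * d := csSup_le hwne key
    omega
  · -- upper bound : isd I ≤ w
    obtain ⟨d₀, R₀, hlad₀, hgen₀⟩ := hdef
    have hMIfacts : ∀ E ∈ MI, (IsExtent I E ∧ E.Nonempty) ∧ (IsExtent I Eᶜ ∧ Eᶜ.Nonempty) := by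
      intro E hE
      obtain ⟨i, hi⟩ := MI_mem_ladders hgen₀ hE hlad₀
      exact ⟨(hlad₀ i).1 E hi, (hlad₀ i).1 Eᶜ ((hlad₀ i).2.2 E hi)⟩
    have hMIfin : MI.Finite := Set.toFinite _
    set s : Finset (Set G) := hMIfin.toFinset with hs
    have hsMI : ∀ E, E ∈ s ↔ E ∈ MI := fun E => Set.Finite.mem_toFinset _
    have hfw : fwidth s ≤ w := by
      apply csSup_le (fwidth_nonempty s)
      rintro n ⟨tt, hts, hta, rfl⟩
      apply le_csSup hbdd
      refine ⟨(tt : Set (Set G)), ?_, tt.finite_toSet, hta, Set.ncard_coe_finset tt⟩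
      intro E hE
      exact (hsMI E).1 (hts hE)
    obtain ⟨C, hCcard, hCchain, hCcov⟩ := dilworth s
    have hCw : C.card ≤ w := hCcard.trans hfw
    -- the ladder associated to a chain
    set Lad : Finset (Set G) → Set (Set G) := fun c =>
      {E | E ∈ c ∧ E ∈ MI} ∪ (compl '' {E | E ∈ c ∧ E ∈ MI}) with hLad
    have hLadder : ∀ c ∈ C, IsExtentLadder I (Lad c) := by
      intro c hc
      have hchain := hCchain c hc
      have hcomp1 : ∀ X Y : Set G, (X ∈ c ∧ X ∈ MI) → (Y ∈ c ∧ Y ∈ MI) →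
          X ⊆ Y ∨ Y ⊆ X := by
        intro X Y hX hY
        rcases eq_or_ne X Y with rfl | hne
        · exact Or.inl subset_rfl
        · exact hchain hX.1 hY.1 hne
      refine ⟨?_, ?_, ?_⟩
      · rintro A (⟨hAc, hAMI⟩ | ⟨E, ⟨hEc, hEMI⟩, rfl⟩)
        · exact (hMIfacts A hAMI).1
        · exact (hMIfacts E hEMI).2
      · rintro ⟨A, hA, B, hB, D, hD, ⟨hAB, hBA⟩, ⟨hAD, hDA⟩, ⟨hBD, hDB⟩⟩
        have hcomp : ∀ X Y : Set G, X ∈ Lad c → Y ∈ Lad c →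
            ((X ∈ c ∧ X ∈ MI) ∧ (Y ∈ c ∧ Y ∈ MI)) ∨
            ((∃ E, (E ∈ c ∧ E ∈ MI) ∧ Eᶜ = X) ∧ (∃ E, (E ∈ c ∧ E ∈ MI) ∧ Eᶜ = Y)) →
            X ⊆ Y ∨ Y ⊆ X := by
          rintro X Y hX hY (⟨h1, h2⟩ | ⟨⟨E, hE, rfl⟩, ⟨F, hF, rfl⟩⟩)
          · exact hcomp1 X Y h1 h2
          · rcases hcomp1 E F hE hF with h | h
            · exact Or.inr (Set.compl_subset_compl.2 h)
            · exact Or.inl (Set.compl_subset_compl.2 h)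
        rcases hA with hA1 | hA2 <;> rcases hB with hB1 | hB2 <;> rcases hD with hD1 | hD2
        · rcases hcomp A B (Or.inl hA1) (Or.inl hB1) (Or.inl ⟨hA1, hB1⟩) with h | h
          exacts [hAB h, hBA h]
        · rcases hcomp A B (Or.inl hA1) (Or.inl hB1) (Or.inl ⟨hA1, hB1⟩) with h | h
          exacts [hAB h, hBA h]
        · rcases hcomp A D (Or.inl hA1) (Or.inl hD1) (Or.inl ⟨hA1, hD1⟩) with h | h
          exacts [hAD h, hDA h]
        · rcases hcomp B D (Or.inr hB2) (Or.inr hD2) (Or.inr ⟨hB2, hD2⟩) with h | h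
          exacts [hBD h, hDB h]
        · rcases hcomp B D (Or.inl hB1) (Or.inl hD1) (Or.inl ⟨hB1, hD1⟩) with h | h
          exacts [hBD h, hDB h]
        · rcases hcomp A D (Or.inr hA2) (Or.inr hD2) (Or.inr ⟨hA2, hD2⟩) with h | h
          exacts [hAD h, hDA h]
        · rcases hcomp A B (Or.inr hA2) (Or.inr hB2) (Or.inr ⟨hA2, hB2⟩) with h | h
          exacts [hAB h, hBA h]
        · rcases hcomp A B (Or.inr hA2) (Or.inr hB2) (Or.inr ⟨hA2, hB2⟩) with h | h
          exacts [hAB h, hBA h]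
      · rintro A (hA1 | ⟨E, hE, rfl⟩)
        · exact Or.inr ⟨A, hA1, rfl⟩
        · exact Or.inl (by rw [compl_compl]; exact hE)
    -- index the ladders by Fin w
    set l : List (Finset (Set G)) := C.toList with hl
    have hlen : l.length ≤ w := by rw [hl, Finset.length_toList]; exact hCw
    set RR : Fin w → Set (Set G) := fun i =>
      if h : (i : ℕ) < l.length then Lad (l.get ⟨i, h⟩) else ∅ with hRR
    have hRRlad : ∀ i, IsExtentLadder I (RR i) := by
      intro i
      simp only [hRR]
      split_ifs with h
      · exact hLadder _ (Finset.mem_toList.1 (l.get_mem _))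
      · exact ⟨fun A hA => absurd hA (Set.notMem_empty A),
          by rintro ⟨A, hA, -⟩; exact Set.notMem_empty A hA,
          fun A hA => absurd hA (Set.notMem_empty A)⟩
    have hMIcov : ∀ F ∈ MI, F ∈ ⋃ i, RR i := by
      intro F hF
      obtain ⟨c, hc, hFc⟩ := hCcov F ((hsMI F).2 hF)
      obtain ⟨⟨j, hj⟩, hget⟩ := List.mem_iff_get.1 (Finset.mem_toList.2 hc)
      refine Set.mem_iUnion.2 ⟨⟨j, lt_of_lt_of_le hj hlen⟩, ?_⟩
      simp only [hRR, dif_pos hj]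
      rw [dif_pos (show j < l.length from hj)]
      show F ∈ Lad (C.toList.get ⟨j, hj⟩)
      rw [hget]
      exact Or.inl ⟨hFc, hF⟩
    have hgen : {E | IsExtent I E} = {E | ∃ F ⊆ ⋃ i, RR i, E = ⋂₀ F} := by
      ext E
      simp only [Set.mem_setOf_eq]
      constructor
      · intro hE
        refine ⟨{F | IsMeetIrreducibleExtent I F ∧ E ⊆ F}, ?_, extent_eq_sInter_MI hE⟩
        intro F hF
        exact hMIcov F hF.1
      · rintro ⟨F, hFsub, rfl⟩
        apply isExtent_sInter
        intro A hA
        obtain ⟨i, hi⟩ := Set.mem_iUnion.1 (hFsub hA)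
        exact ((hRRlad i).1 A hi).1
    exact Nat.sInf_le ⟨RR, hRRlad, hgen⟩

end Main


/-- For a finite formal context whose interordinal scaling dimension is
defined, if `w` is the width of the ordered set of meet-irreducible extents, then
`w/2 ≤ isd K ≤ w`. -/
theorem isd_bounds_via_width {G M : Type*} [Fintype G] [Fintype M] (I : G → M → Prop)
    (hdef : ∃ d, HasISDAtMost I d) :
    posetWidth {E | IsMeetIrreducibleExtent I E} / 2 ≤ isd I ∧
    isd I ≤ posetWidth {E | IsMeetIrreducibleExtent I E} := by
  exact isd_bounds_via_width_aux I hdef
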